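/- The algebraic condition ε^{i_1...i_{n-1} j_1...j_{n-1}}_{k_1...k_{2n-2}} (ω_{i_1...i_{n-1}ρ} ω_{j_1...j_{n-1}σ} + ω_{i_1...i_{n-1}σ} ω_{j_1...j_{n-1}ρ}) = 0 is automatically satisfied by any completely antisymmetric n-tensor ω when n is even. -/

import Mathlib

open Fin.NatCast Fin.CommRing in
lemma finRotate_pow_apply (n k : ℕ) (i : Fin (n+1)) :
    ((finRotate (n+1))^k) i = i + (k : Fin (n+1)) := by
  induction k generalizing i with
  | zero => simp
  | succ k ih =>
    rw [pow_succ', Equiv.Perm.mul_apply, finRotate_succ_apply, ih]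
    push_cast
    ring

open Fin.NatCast in
lemma sign_flip (q : ℕ) :
    Equiv.Perm.sign (finAddFlip : Fin ((q+1)+(q+1)) ≃ Fin ((q+1)+(q+1))) = (-1)^(q+1) := by
  have key : Equiv.Perm.sign (finAddFlip : Fin ((q+1)+(q+1)) ≃ Fin ((q+1)+(q+1)))
      = Equiv.Perm.sign ((finRotate ((q+(q+1))+1))^(q+1)) := by
    apply Equiv.Perm.sign_eq_sign_of_equiv _ _ (finCongr (by omega : (q+1)+(q+1) = (q+(q+1))+1))
    intro x
    rw [finRotate_pow_apply]
    ext
    rcases lt_or_ge (x : ℕ) (q+1) with h | h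
    · have hval : ((finAddFlip x : Fin ((q+1)+(q+1))) : ℕ) = (x:ℕ) + (q+1) := by
        rw [show x = Fin.castAdd (q+1) ⟨x, h⟩ from by ext; simp, finAddFlip_apply_castAdd]
        simp
      simp only [finCongr_apply, Fin.coe_cast, Fin.add_def, Fin.val_natCast, hval]
      rw [Nat.mod_eq_of_lt (by omega : q+1 < q+(q+1)+1), Nat.mod_eq_of_lt (by omega)]
    · have hi : (x:ℕ) - (q+1) < q+1 := by omega
      have hval : ((finAddFlip x : Fin ((q+1)+(q+1))) : ℕ) = (x:ℕ) - (q+1) := by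
        rw [show x = Fin.natAdd (q+1) ⟨(x:ℕ)-(q+1), hi⟩ from by ext; simp; omega,
          finAddFlip_apply_natAdd]
        simp
      simp only [finCongr_apply, Fin.coe_cast, Fin.add_def, Fin.val_natCast, hval]
      rw [Nat.mod_eq_of_lt (by omega : q+1 < q+(q+1)+1),
        Nat.mod_eq_sub_mod (by omega), Nat.mod_eq_of_lt (by omega)]
      omega
  rw [key, map_pow, sign_finRotate, ← pow_mul]
  rcases Nat.even_or_odd (q+1) with he | ho
  · rw [(he.mul_left _).neg_one_pow, he.neg_one_pow]
  · rw [(Odd.mul ⟨q, by omega⟩ ho).neg_one_pow, ho.neg_one_pow]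


/-- the algebraic condition
`ε^{i₁...i_{n-1} j₁...j_{n-1}}_{k₁...k_{2n-2}} (ω_{i...ρ} ω_{j...σ} + ω_{i...σ} ω_{j...ρ}) = 0`
(formulated as the signed sum over all permutations of the `2n-2` indices `k`) is automatically
satisfied by any completely antisymmetric tensor `ω` of even order `n = 2p+2`. -/
theorem algebraic_condition_automatic_for_even_order
    (p d : ℕ) (ω : (Fin (2 * p + 2) → Fin d) → ℝ)
    (hanti : ∀ (σ : Equiv.Perm (Fin (2 * p + 2))) (idx : Fin (2 * p + 2) → Fin d),
      ω (idx ∘ σ) = (Equiv.Perm.sign σ : ℤ) • ω idx)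
    (ρ σv : Fin d) (k : Fin ((2 * p + 1) + (2 * p + 1)) → Fin d) :
    ∑ τ : Equiv.Perm (Fin ((2 * p + 1) + (2 * p + 1))),
      (Equiv.Perm.sign τ : ℤ) •
        (ω (Fin.snoc (fun a : Fin (2 * p + 1) => k (τ (Fin.castAdd (2 * p + 1) a))) ρ) *
            ω (Fin.snoc (fun b : Fin (2 * p + 1) => k (τ (Fin.natAdd (2 * p + 1) b))) σv) +
          ω (Fin.snoc (fun a : Fin (2 * p + 1) => k (τ (Fin.castAdd (2 * p + 1) a))) σv) *
            ω (Fin.snoc (fun b : Fin (2 * p + 1) => k (τ (Fin.natAdd (2 * p + 1) b))) ρ)) = 0 := by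
  set e : Equiv.Perm (Fin ((2 * p + 1) + (2 * p + 1))) := finAddFlip with hedef
  have he : Equiv.Perm.sign e = -1 := by
    rw [hedef, sign_flip (2*p)]
    exact Odd.neg_one_pow ⟨p, by ring⟩
  set F : Equiv.Perm (Fin ((2 * p + 1) + (2 * p + 1))) → ℝ := fun τ =>
      (Equiv.Perm.sign τ : ℤ) •
        (ω (Fin.snoc (fun a : Fin (2 * p + 1) => k (τ (Fin.castAdd (2 * p + 1) a))) ρ) *
            ω (Fin.snoc (fun b : Fin (2 * p + 1) => k (τ (Fin.natAdd (2 * p + 1) b))) σv) +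
          ω (Fin.snoc (fun a : Fin (2 * p + 1) => k (τ (Fin.castAdd (2 * p + 1) a))) σv) *
            ω (Fin.snoc (fun b : Fin (2 * p + 1) => k (τ (Fin.natAdd (2 * p + 1) b))) ρ)) with hF
  have key : ∀ τ, F (τ * e) = - F τ := by
    intro τ
    have hs : (Equiv.Perm.sign (τ * e) : ℤ) = -(Equiv.Perm.sign τ : ℤ) := by
      rw [map_mul, he]; push_cast; ring
    have ha : ∀ a, (τ * e) (Fin.castAdd (2*p+1) a) = τ (Fin.natAdd (2*p+1) a) := fun a => by
      rw [Equiv.Perm.mul_apply, hedef, finAddFlip_apply_castAdd]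
    have hb : ∀ b, (τ * e) (Fin.natAdd (2*p+1) b) = τ (Fin.castAdd (2*p+1) b) := fun b => by
      rw [Equiv.Perm.mul_apply, hedef, finAddFlip_apply_natAdd]
    rw [hF]
    simp only [ha, hb, hs, neg_smul, neg_inj]
    exact congrArg _ (by ring)
  have h2 : ∑ τ, F τ = ∑ τ, F (τ * e) :=
    (Equiv.sum_comp (Equiv.mulRight e) F).symm
  have h3 : ∑ τ, F τ = - ∑ τ, F τ := by
    conv_lhs => rw [h2]
    simp only [key]
    rw [Finset.sum_neg_distrib]
  linarith
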